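/- Let λ ∈ C ∩ X, let w ∈ W_p, and let α ∈ Φ⁺ and n ∈ ℤ be such that the hyperplane H_{α,n} contains a wall of the alcove containing w·λ. If s_{α,np}w·λ ≺ w·λ, then d(s_{α,np}w·λ) = d(w·λ) − 1. -/

import Mathlib

noncomputable section

/-- The real vector space `X ⊗ ℝ`, where `X` is a free abelian group of rank `r`. -/
abbrev Vr (r : ℕ) := Fin r → ℝ

/-- The lattice `X` (identified with `ℤ^r`); its dual lattice `Y` is identified with
the same coordinate lattice via the standard perfect pairing. -/
abbrev Lr (r : ℕ) := Fin r → ℤ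

/-- The embedding `X → X ⊗ ℝ`. -/
def toV {r : ℕ} (x : Lr r) : Vr r := fun i => (x i : ℝ)

/-- The perfect pairing `⟨·,·⟩ : X × Y → ℤ`. -/
def pairZ {r : ℕ} (x y : Lr r) : ℤ := ∑ i, x i * y i

/-- The real extension of the pairing to `(X ⊗ ℝ) × Y → ℝ`. -/
def pairR {r : ℕ} (v : Vr r) (y : Lr r) : ℝ := ∑ i, v i * (y i : ℝ)

/-- The subgroup `ℤI` of `X` generated by a subset `I ⊆ X`. -/
def ZI {r : ℕ} (I : Finset (Lr r)) : AddSubgroup (Lr r) :=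
  AddSubgroup.closure (I : Set (Lr r))

/-- The data of a reduced crystallographic root system `Φ ⊆ X` with a fixed positive
system `Φ⁺`, simple roots `Φ_s`, coroots `α∨ ∈ Y`, a prime `p`, and the half-sum
`ρ ∈ X` of the positive roots. -/
structure ARDatum (r : ℕ) where
  Φ : Finset (Lr r)
  pos : Finset (Lr r)
  simples : Finset (Lr r)
  coroot : Lr r → Lr r
  p : ℕ
  ρ : Lr r
  hp : p.Prime
  root_ne_zero : ∀ α ∈ Φ, α ≠ 0
  pos_sub : pos ⊆ Φ
  simples_sub : simples ⊆ pos
  pos_or_neg : ∀ α ∈ Φ, α ∈ pos ∨ -α ∈ pos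
  not_pos_and_neg : ∀ α ∈ pos, -α ∉ pos
  neg_mem : ∀ α ∈ Φ, -α ∈ Φ
  root_coroot_two : ∀ α ∈ Φ, pairZ α (coroot α) = 2
  reflect_root_mem : ∀ α ∈ Φ, ∀ β ∈ Φ, β - pairZ β (coroot α) • α ∈ Φ
  reflect_coroot_mem : ∀ α ∈ Φ, ∀ β ∈ Φ,
    coroot β - pairZ α (coroot β) • coroot α ∈ coroot '' (Φ : Set (Lr r))
  reduced : ∀ α ∈ Φ, ∀ c : ℤ, c • α ∈ Φ → c = 1 ∨ c = -1
  pos_sum_simples : ∀ β ∈ pos, ∃ c : Lr r → ℕ, β = ∑ α ∈ simples, (c α : ℤ) • α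
  two_rho : (2 : ℤ) • ρ = ∑ α ∈ pos, α

namespace ARDatum

/-- The group of affine transformations of `X ⊗ ℝ`. -/
abbrev G (r : ℕ) := (Vr r) ≃ᵃ[ℝ] (Vr r)

variable {r : ℕ} (D : ARDatum r)

/-- `g` is the affine reflection `s_{α,mp} : v ↦ v − (⟨v,α∨⟩ − mp)·α`. -/
def IsRefl (α : Lr r) (m : ℤ) (g : G r) : Prop :=
  ∀ v : Vr r, g v = v - (pairR v (D.coroot α) - (m : ℝ) * (D.p : ℝ)) • toV α

/-- `g` is the linear reflection `s_α : v ↦ v − ⟨v,α∨⟩·α`. -/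
def IsLinRefl (α : Lr r) (g : G r) : Prop := D.IsRefl α 0 g

/-- `g` is the translation `t_{α,mp} : v ↦ v + mp·α`. -/
def IsTransl (α : Lr r) (m : ℤ) (g : G r) : Prop :=
  ∀ v : Vr r, g v = v + ((m : ℝ) * (D.p : ℝ)) • toV α

/-- The affine Weyl group `W_p`, generated by the `s_α` and the `t_{α,mp}`
for `α ∈ Φ⁺`, `m ∈ ℤ`. -/
def Wp : Subgroup (G r) :=
  Subgroup.closure ({g | ∃ α ∈ D.pos, D.IsLinRefl α g} ∪
    {g | ∃ α ∈ D.pos, ∃ m : ℤ, D.IsTransl α m g})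

/-- The finite Weyl group `W`, generated by the `s_α` for `α ∈ Φ⁺`. -/
def W : Subgroup (G r) :=
  Subgroup.closure {g | ∃ α ∈ D.pos, D.IsLinRefl α g}

/-- The subgroup `W_{I,p}` generated by the `s_α` and `t_{α,mp}` for `α ∈ I`. -/
def WIp (I : Finset (Lr r)) : Subgroup (G r) :=
  Subgroup.closure ({g | ∃ α ∈ I, D.IsLinRefl α g} ∪
    {g | ∃ α ∈ I, ∃ m : ℤ, D.IsTransl α m g})

/-- The subgroup `W_I` of `W` generated by the `s_α` for `α ∈ I`. -/
def WI (I : Finset (Lr r)) : Subgroup (G r) :=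
  Subgroup.closure {g | ∃ α ∈ I, D.IsLinRefl α g}

/-- `g` is a reflection (the reflections of `W_p` are exactly the `s_{α,mp}`). -/
def IsReflection (g : G r) : Prop := ∃ α ∈ D.pos, ∃ m : ℤ, D.IsRefl α m g

/-- The dot action `w·v := w(v+ρ) − ρ`. -/
def dot (g : G r) (v : Vr r) : Vr r := g (v + toV D.ρ) - toV D.ρ

/-- The hyperplane `H_{α,n} = {v : ⟨v+ρ,α∨⟩ = np}`. -/
def Hyp (α : Lr r) (n : ℤ) : Set (Vr r) :=
  {v | pairR (v + toV D.ρ) (D.coroot α) = (n : ℝ) * (D.p : ℝ)}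

/-- The complement of the union of all the hyperplanes `H_{α,n}`. -/
def Reg : Set (Vr r) :=
  {v | ∀ α ∈ D.pos, ∀ n : ℤ, pairR (v + toV D.ρ) (D.coroot α) ≠ (n : ℝ) * (D.p : ℝ)}

/-- The alcove containing `v` (the connected component of `v` in the complement of
the hyperplanes). -/
def alcoveOf (v : Vr r) : Set (Vr r) := connectedComponentIn D.Reg v

/-- `H_{α,n}` contains a wall of `A`, i.e. the interior of `closure A ∩ H_{α,n}`
inside the hyperplane `H_{α,n}` is nonempty. -/
def HasWall (A : Set (Vr r)) (α : Lr r) (n : ℤ) : Prop :=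
  ∃ x ∈ closure A ∩ D.Hyp α n, ∃ ε > 0,
    ∀ y ∈ D.Hyp α n, dist y x < ε → y ∈ closure A

/-- The fundamental alcove `C`. -/
def FundC : Set (Vr r) :=
  {v | ∀ α ∈ D.pos, 0 < pairR (v + toV D.ρ) (D.coroot α) ∧
    pairR (v + toV D.ρ) (D.coroot α) < (D.p : ℝ)}

/-- The closure `C̄` of the fundamental alcove. -/
def FundCBar : Set (Vr r) :=
  {v | ∀ α ∈ D.pos, 0 ≤ pairR (v + toV D.ρ) (D.coroot α) ∧
    pairR (v + toV D.ρ) (D.coroot α) ≤ (D.p : ℝ)}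

/-- The region `C_I`. -/
def CI (I : Finset (Lr r)) : Set (Vr r) :=
  {v | ∀ α ∈ D.pos, α ∈ ZI I → 0 < pairR (v + toV D.ρ) (D.coroot α) ∧
    pairR (v + toV D.ρ) (D.coroot α) < (D.p : ℝ)}

/-- The region `C̄_I`. -/
def CIBar (I : Finset (Lr r)) : Set (Vr r) :=
  {v | ∀ α ∈ D.pos, α ∈ ZI I → 0 ≤ pairR (v + toV D.ρ) (D.coroot α) ∧
    pairR (v + toV D.ρ) (D.coroot α) ≤ (D.p : ℝ)}

/-- `S_p`: the reflections of `W_p` in the walls of the fundamental alcove `C`. -/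
def Sp : Set (G r) :=
  {g | g ∈ D.Wp ∧ ∃ α ∈ D.pos, ∃ m : ℤ, D.IsRefl α m g ∧ D.HasWall D.FundC α m}

/-- One step of the order `⪯` (`↑`): `s_{α,mp}·u ⪯ u` whenever `⟨u+ρ,α∨⟩ ≥ mp`. -/
def UpStep (v u : Vr r) : Prop :=
  ∃ α ∈ D.pos, ∃ m : ℤ, (m : ℝ) * (D.p : ℝ) ≤ pairR (u + toV D.ρ) (D.coroot α) ∧
    v = u - (pairR (u + toV D.ρ) (D.coroot α) - (m : ℝ) * (D.p : ℝ)) • toV α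

/-- The order `⪯` (`↑`): the reflexive-transitive closure of `UpStep`. -/
def Up : Vr r → Vr r → Prop := Relation.ReflTransGen D.UpStep

/-- The strict order `≺`. -/
def Ups (v u : Vr r) : Prop := D.Up v u ∧ v ≠ u

/-- The order `≤`: `v ≤ u` iff `u − v` is a `ℤ≥0`-combination of the simple roots. -/
def Le (v u : Vr r) : Prop :=
  ∃ c : Lr r → ℕ, u - v = ∑ α ∈ D.simples, (c α : ℝ) • toV α

/-- The strict order `<`. -/
def Lt (v u : Vr r) : Prop := D.Le v u ∧ v ≠ u

/-- `X₊ = {ν ∈ X : ⟨ν+ρ,α∨⟩ ≥ 0 for all α ∈ Φ⁺}`, viewed inside `X ⊗ ℝ`. -/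
def XplusR : Set (Vr r) :=
  {v | (∃ ν : Lr r, toV ν = v) ∧ ∀ α ∈ D.pos, 0 ≤ pairR (v + toV D.ρ) (D.coroot α)}

/-- `n_α(v)`: the unique integer with `n_α(v)·p < ⟨v+ρ,α∨⟩ < (n_α(v)+1)·p`
(for `v` on none of the hyperplanes), realised as a floor. -/
def nfl (v : Vr r) (α : Lr r) : ℤ := ⌊pairR (v + toV D.ρ) (D.coroot α) / (D.p : ℝ)⌋

/-- `d(v) = ∑_{α ∈ Φ⁺} n_α(v)`. -/
def dfn (v : Vr r) : ℤ := ∑ α ∈ D.pos, D.nfl v α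

/-- The sublattice `pX` of `X`. -/
def pLat : AddSubgroup (Lr r) where
  carrier := {x | ∃ y : Lr r, x = (D.p : ℤ) • y}
  zero_mem' := ⟨0, by simp⟩
  add_mem' := by rintro a b ⟨y, rfl⟩ ⟨z, rfl⟩; exact ⟨y + z, (smul_add _ _ _).symm⟩
  neg_mem' := by rintro a ⟨y, rfl⟩; exact ⟨-y, (smul_neg _ _).symm⟩

/-- The orbit of `ν + pX` under the dot action of `W_I` on `X/pX`. -/
def dotOrbit (I : Finset (Lr r)) (ν : Lr r) : Set (Lr r ⧸ D.pLat) :=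
  {c | ∃ w ∈ D.WI I, ∃ ν' : Lr r, toV ν' = D.dot w (toV ν) ∧
    c = QuotientAddGroup.mk ν'}

end ARDatum

namespace Aux

open ARDatum

variable {r : ℕ}

lemma toV_inj {a b : Lr r} (h : toV a = toV b) : a = b := by
  funext i
  have h2 : ((a i : ℝ)) = (b i : ℝ) := congrFun h i
  exact_mod_cast h2

lemma toV_neg (x : Lr r) : toV (-x) = -toV x := by
  funext i; simp [toV]

lemma toV_sub_zsmul (x y : Lr r) (m : ℤ) :
    toV (x - m • y) = toV x - (m : ℝ) • toV y := by
  funext i; simp [toV]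

lemma pairR_add_left (u v : Vr r) (y : Lr r) :
    pairR (u + v) y = pairR u y + pairR v y := by
  simp [pairR, add_mul, Finset.sum_add_distrib]

lemma pairR_sub_left (u v : Vr r) (y : Lr r) :
    pairR (u - v) y = pairR u y - pairR v y := by
  simp [pairR, sub_mul, Finset.sum_sub_distrib]

lemma pairR_smul_left (c : ℝ) (u : Vr r) (y : Lr r) :
    pairR (c • u) y = c * pairR u y := by
  simp [pairR, Finset.mul_sum, mul_assoc]

lemma pairR_neg_left (u : Vr r) (y : Lr r) : pairR (-u) y = - pairR u y := by
  simp [pairR, Finset.sum_neg_distrib]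

lemma pairR_toV (x y : Lr r) : pairR (toV x) y = ((pairZ x y : ℤ) : ℝ) := by
  unfold pairR pairZ toV; push_cast; rfl

lemma pairR_sub_right (v : Vr r) (y z : Lr r) :
    pairR v (y - z) = pairR v y - pairR v z := by
  simp [pairR, mul_sub, Finset.sum_sub_distrib]

lemma pairR_zsmul_right (v : Vr r) (m : ℤ) (y : Lr r) :
    pairR v (m • y) = (m : ℝ) * pairR v y := by
  unfold pairR
  rw [Finset.mul_sum]
  refine Finset.sum_congr rfl fun i _ => ?_
  simp [Pi.smul_apply, smul_eq_mul]
  push_cast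
  ring

/-- The auxiliary Weyl-invariant bilinear form. -/
def Bf (D : ARDatum r) (x y : Vr r) : ℝ :=
  ∑ c ∈ D.Φ.image D.coroot, pairR x c * pairR y c

lemma Bf_symm (D : ARDatum r) (x y : Vr r) : Bf D x y = Bf D y x := by
  unfold Bf; refine Finset.sum_congr rfl fun c _ => mul_comm _ _

lemma Bf_sub_left (D : ARDatum r) (x y z : Vr r) :
    Bf D (x - y) z = Bf D x z - Bf D y z := by
  simp [Bf, pairR_sub_left, sub_mul, Finset.sum_sub_distrib]

lemma Bf_smul_left (D : ARDatum r) (c : ℝ) (x z : Vr r) :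
    Bf D (c • x) z = c * Bf D x z := by
  simp [Bf, pairR_smul_left, Finset.mul_sum, mul_assoc]

lemma Bf_neg_left (D : ARDatum r) (x z : Vr r) : Bf D (-x) z = - Bf D x z := by
  simp [Bf, pairR_neg_left, Finset.sum_neg_distrib]

lemma Bf_sub_right (D : ARDatum r) (x y z : Vr r) :
    Bf D x (y - z) = Bf D x y - Bf D x z := by
  rw [Bf_symm, Bf_sub_left, Bf_symm D y x, Bf_symm D z x]

lemma Bf_smul_right (D : ARDatum r) (c : ℝ) (x z : Vr r) :
    Bf D x (c • z) = c * Bf D x z := by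
  rw [Bf_symm, Bf_smul_left, Bf_symm]

lemma Bf_neg_right (D : ARDatum r) (x z : Vr r) : Bf D x (-z) = - Bf D x z := by
  rw [Bf_symm, Bf_neg_left, Bf_symm]

lemma pairR_coroot_self (D : ARDatum r) {γ : Lr r} (hγ : γ ∈ D.Φ) :
    pairR (toV γ) (D.coroot γ) = 2 := by
  rw [pairR_toV]
  exact_mod_cast congrArg (fun z : ℤ => (z : ℝ)) (D.root_coroot_two γ hγ)

/-- Invariance key identity: `2·B(x,γ) = ⟨x,γ∨⟩·B(γ,γ)`. -/
lemma Bf_reflect (D : ARDatum r) {γ : Lr r} (hγ : γ ∈ D.Φ) (x : Vr r) :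
    2 * Bf D x (toV γ) = pairR x (D.coroot γ) * Bf D (toV γ) (toV γ) := by
  classical
  set a := D.coroot γ with ha
  have h2 : pairR (toV γ) a = 2 := pairR_coroot_self D hγ
  set σ : Lr r → Lr r := fun c => c - pairZ γ c • a with hσ
  have hσval : ∀ (u : Vr r) (c : Lr r),
      pairR (u - pairR u a • toV γ) c = pairR u (σ c) := by
    intro u c
    rw [hσ]
    simp only []
    rw [pairR_sub_left, pairR_smul_left, pairR_sub_right, pairR_zsmul_right, pairR_toV]
    ring
  have hσσ : ∀ c, σ (σ c) = c := by
    intro c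
    have hz : pairZ γ (σ c) = - pairZ γ c := by
      have h3 : ((pairZ γ (σ c) : ℤ) : ℝ) = ((- pairZ γ c : ℤ) : ℝ) := by
        rw [← pairR_toV, hσ]
        simp only []
        rw [pairR_sub_right, pairR_zsmul_right, pairR_toV, pairR_toV, ha,
          D.root_coroot_two γ hγ]
        push_cast; ring
      exact_mod_cast h3
    rw [hσ]; simp only []
    rw [hz, neg_smul, sub_neg_eq_add]
    abel
  have hσmem : ∀ c ∈ D.Φ.image D.coroot, σ c ∈ D.Φ.image D.coroot := by
    intro c hc
    obtain ⟨δ, hδ, rfl⟩ := Finset.mem_image.mp hc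
    have := D.reflect_coroot_mem γ hγ δ hδ
    obtain ⟨δ', hδ', hδ'eq⟩ := this
    rw [hσ]
    exact Finset.mem_image.mpr ⟨δ', hδ', hδ'eq⟩
  have key : ∀ u w : Vr r,
      Bf D (u - pairR u a • toV γ) (w - pairR w a • toV γ) = Bf D u w := by
    intro u w
    unfold Bf
    calc ∑ c ∈ D.Φ.image D.coroot,
          pairR (u - pairR u a • toV γ) c * pairR (w - pairR w a • toV γ) c
        = ∑ c ∈ D.Φ.image D.coroot, pairR u (σ c) * pairR w (σ c) := by
          refine Finset.sum_congr rfl fun c _ => by rw [hσval, hσval]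
      _ = ∑ c ∈ D.Φ.image D.coroot, pairR u c * pairR w c := by
          refine Finset.sum_nbij' σ σ hσmem hσmem (fun c _ => hσσ c) (fun c _ => hσσ c)
            (fun c hc => rfl)
  have hkey := key x (toV γ)
  rw [h2] at hkey
  have hexp : toV γ - (2:ℝ) • toV γ = -toV γ := by
    funext i; simp; ring
  rw [hexp] at hkey
  rw [Bf_sub_left, Bf_smul_left, Bf_neg_right, Bf_neg_right] at hkey
  linarith [hkey]

lemma Bf_diag_pos (D : ARDatum r) {γ : Lr r} (hγ : γ ∈ D.Φ) :
    0 < Bf D (toV γ) (toV γ) := by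
  have hmem : D.coroot γ ∈ D.Φ.image D.coroot := Finset.mem_image_of_mem _ hγ
  have h2 : pairR (toV γ) (D.coroot γ) = 2 := pairR_coroot_self D hγ
  have hle := Finset.single_le_sum
    (f := fun c => pairR (toV γ) c * pairR (toV γ) c)
    (fun c _ => mul_self_nonneg _) hmem
  norm_num [h2] at hle
  unfold Bf
  linarith

lemma pairR_coroot_neg (D : ARDatum r) {γ : Lr r} (hγ : γ ∈ D.Φ) (v : Vr r) :
    pairR v (D.coroot (-γ)) = - pairR v (D.coroot γ) := by
  have hγ' : -γ ∈ D.Φ := D.neg_mem γ hγ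
  have h1 := Bf_reflect D hγ v
  have h2 := Bf_reflect D hγ' v
  rw [toV_neg, Bf_neg_right, Bf_neg_left, Bf_neg_right, neg_neg] at h2
  have hQ := Bf_diag_pos D hγ
  have : pairR v (D.coroot (-γ)) * Bf D (toV γ) (toV γ)
      = (- pairR v (D.coroot γ)) * Bf D (toV γ) (toV γ) := by linarith
  exact mul_right_cancel₀ (ne_of_gt hQ) this

lemma parallel_of_perp (D : ARDatum r) {α β : Lr r} (hα : α ∈ D.Φ) (hβ : β ∈ D.Φ)
    (h : ∀ u : Vr r, pairR u (D.coroot α) = 0 → pairR u (D.coroot β) = 0) :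
    ∃ s : ℝ, ∀ v : Vr r, pairR v (D.coroot β) = s * pairR v (D.coroot α) := by
  classical
  set Qa := Bf D (toV α) (toV α) with hQa
  set Qb := Bf D (toV β) (toV β) with hQb
  set Bab := Bf D (toV α) (toV β) with hBab
  have hQa0 := Bf_diag_pos D hα
  have hQb0 := Bf_diag_pos D hβ
  set w : Vr r := Qa • toV β - Bab • toV α with hw
  have hwα : Bf D w (toV α) = 0 := by
    rw [hw, Bf_sub_left, Bf_smul_left, Bf_smul_left, Bf_symm D (toV β) (toV α)]
    ring
  have hpwα : pairR w (D.coroot α) = 0 := by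
    have hr := Bf_reflect D hα w
    rw [hwα, mul_zero] at hr
    rcases mul_eq_zero.mp hr.symm with h' | h'
    · exact h'
    · exact absurd h' (ne_of_gt hQa0)
  have hpwβ := h w hpwα
  have hwβ : Bf D w (toV β) = 0 := by
    have hr := Bf_reflect D hβ w
    rw [hpwβ, zero_mul] at hr
    linarith
  have hww : Bf D w w = 0 := by
    nth_rewrite 2 [hw]
    rw [Bf_sub_right, Bf_smul_right, Bf_smul_right, hwα, hwβ]
    ring
  have hzero : ∀ c ∈ D.Φ.image D.coroot, pairR w c = 0 := by
    intro c hc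
    have hsum : ∑ c ∈ D.Φ.image D.coroot, pairR w c * pairR w c = 0 := hww
    have h6 := (Finset.sum_eq_zero_iff_of_nonneg
      (fun c _ => mul_self_nonneg (pairR w c))).mp hsum c hc
    exact mul_self_eq_zero.mp h6
  have hBvw : ∀ v : Vr r, Bf D v w = 0 := by
    intro v
    rw [Bf_symm]
    exact Finset.sum_eq_zero fun c hc => by rw [hzero c hc, zero_mul]
  refine ⟨Bab / Qb, fun v => ?_⟩
  have h1 := Bf_reflect D hα v
  have h2 := Bf_reflect D hβ v
  rw [← hQa] at h1
  rw [← hQb] at h2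
  have h3 : Qa * Bf D v (toV β) - Bab * Bf D v (toV α) = 0 := by
    have h4 := hBvw v
    rw [hw, Bf_sub_right, Bf_smul_right, Bf_smul_right] at h4
    linarith
  have hQa' : Qa ≠ 0 := ne_of_gt hQa0
  have hQb' : Qb ≠ 0 := ne_of_gt hQb0
  have hgoal : pairR v (D.coroot β) * Qb * Qa = Bab * pairR v (D.coroot α) * Qa := by
    linear_combination (-Qa) * h2 + Bab * h1 + 2 * h3
  rw [div_mul_eq_mul_div, eq_div_iff hQb']
  exact mul_right_cancel₀ hQa' hgoal

lemma not_parallel (D : ARDatum r) {α β : Lr r} (hαp : α ∈ D.pos) (hβp : β ∈ D.pos)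
    (hne : β ≠ α) (s : ℝ)
    (hs : ∀ v : Vr r, pairR v (D.coroot β) = s * pairR v (D.coroot α)) : False := by
  classical
  have hαΦ : α ∈ D.Φ := D.pos_sub hαp
  have hβΦ : β ∈ D.Φ := D.pos_sub hβp
  set a : ℤ := pairZ α (D.coroot β) with hadef
  set b : ℤ := pairZ β (D.coroot α) with hbdef
  have haR : (a : ℝ) = s * 2 := by
    rw [hadef, ← pairR_toV, hs (toV α), pairR_coroot_self D hαΦ]
  have hbR : (2 : ℝ) = s * (b : ℝ) := by
    rw [hbdef, ← pairR_toV, ← pairR_coroot_self D hβΦ, hs (toV β)]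
  have hab : a * b = 4 := by
    have h5 : ((a * b : ℤ) : ℝ) = ((4 : ℤ) : ℝ) := by
      push_cast
      linear_combination (b : ℝ) * haR - 2 * hbR
    exact_mod_cast h5
  have hb0 : b ≠ 0 := by rintro h0; rw [h0] at hab; omega
  have ha0 : a ≠ 0 := by rintro h0; rw [h0] at hab; omega
  set dv : Vr r := s • toV β - toV α with hdv
  have hdvα : pairR dv (D.coroot α) = 0 := by
    rw [hdv, pairR_sub_left, pairR_smul_left, pairR_toV, pairR_toV, ← hbdef,
      D.root_coroot_two α hαΦ]
    push_cast
    linarith [hbR]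
  have hdv0 : dv ≠ 0 := by
    intro h0
    rw [hdv, sub_eq_zero] at h0
    have hcoord : ∀ i, 2 * α i = a * β i := by
      intro i
      have h6 : (α i : ℝ) = s * (β i : ℝ) := by
        have := congrFun h0 i
        simpa [toV] using this.symm
      have h7 : ((2 * α i : ℤ) : ℝ) = ((a * β i : ℤ) : ℝ) := by
        push_cast
        rw [haR]
        linear_combination 2 * h6
      exact_mod_cast h7
    have h1 : a ∣ 4 := ⟨b, hab.symm⟩
    obtain ⟨hbd1, hbd2⟩ := abs_le.mp (Int.le_of_dvd (by norm_num) ((abs_dvd a 4).mpr h1))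
    clear_value a b
    clear hdvα hadef hbdef haR h1
    interval_cases a
    · -- a = -4 : α = -2β
      exact absurd ((D.reduced β hβΦ (-2)) (by
        have : (-2 : ℤ) • β = α := by
          funext i; have := hcoord i; simp; omega
        rw [this]; exact hαΦ)) (by omega)
    · omega
    · -- a = -2 : α = -β
      refine D.not_pos_and_neg β hβp ?_
      have : -β = α := by funext i; have := hcoord i; simp; omega
      rw [this]; exact hαp
    · -- a = -1 : β = -2α
      exact absurd ((D.reduced α hαΦ (-2)) (by
        have : (-2 : ℤ) • α = β := by
          funext i; have := hcoord i; simp; omega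
        rw [this]; exact hβΦ)) (by omega)
    · omega
    · -- a = 1 : β = 2α
      exact absurd ((D.reduced α hαΦ 2) (by
        have : (2 : ℤ) • α = β := by
          funext i; have := hcoord i; simp; omega
        rw [this]; exact hβΦ)) (by omega)
    · -- a = 2 : α = β
      refine hne ?_
      funext i; have := hcoord i; omega
    · omega
    · -- a = 4 : α = 2β
      exact absurd ((D.reduced β hβΦ 2) (by
        have : (2 : ℤ) • β = α := by
          funext i; have := hcoord i; simp; omega
        rw [this]; exact hαΦ)) (by omega)
  have hβα : pairR (toV β) (D.coroot α) = (b : ℝ) := by rw [pairR_toV, hbdef]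
  have hsb : s * (b : ℝ) = 2 := hbR.symm
  have key : ∀ k : ℕ, ∃ δ ∈ D.Φ, toV δ = toV β - ((k : ℝ) * (b : ℝ)) • dv := by
    intro k
    induction k with
    | zero => exact ⟨β, hβΦ, by simp⟩
    | succ k ih =>
      obtain ⟨δ, hδΦ, hδeq⟩ := ih
      have hℓδ : pairR (toV δ) (D.coroot α) = (b : ℝ) := by
        rw [hδeq, pairR_sub_left, pairR_smul_left, hdvα, hβα]; ring
      have hℓβδ : pairR (toV δ) (D.coroot β) = s * (b : ℝ) := by rw [hs, hℓδ]
      set δ₁ : Lr r := δ - pairZ δ (D.coroot β) • β with hδ₁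
      have hδ₁Φ : δ₁ ∈ D.Φ := D.reflect_root_mem β hβΦ δ hδΦ
      have hδ₁v : toV δ₁ = toV δ - (s * (b : ℝ)) • toV β := by
        rw [hδ₁, toV_sub_zsmul, ← hℓβδ, pairR_toV]
      have hℓδ₁ : pairR (toV δ₁) (D.coroot α) = -(b : ℝ) := by
        rw [hδ₁v, pairR_sub_left, pairR_smul_left, hℓδ, hβα]
        linear_combination (-(b : ℝ)) * hsb
      set δ₂ : Lr r := δ₁ - pairZ δ₁ (D.coroot α) • α with hδ₂
      have hδ₂Φ : δ₂ ∈ D.Φ := D.reflect_root_mem α hαΦ δ₁ hδ₁Φ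
      have hδ₂v : toV δ₂ = toV δ₁ + (b : ℝ) • toV α := by
        rw [hδ₂, toV_sub_zsmul, ← pairR_toV, hℓδ₁, neg_smul, sub_neg_eq_add]
      refine ⟨δ₂, hδ₂Φ, ?_⟩
      rw [hδ₂v, hδ₁v, hδeq, hdv]
      funext i
      simp only [Pi.add_apply, Pi.sub_apply, Pi.smul_apply, smul_eq_mul]
      push_cast
      ring
  have hinj : Function.Injective (fun k : ℕ => toV β - ((k : ℝ) * (b : ℝ)) • dv) := by
    intro k₁ k₂ h
    simp only [sub_right_inj] at h
    have h6 : ((k₁ : ℝ) * b - (k₂ : ℝ) * b) • dv = 0 := by rw [sub_smul, h]; abel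
    rcases smul_eq_zero.mp h6 with h7 | h7
    · have h8 : (k₁ : ℝ) * b = (k₂ : ℝ) * b := by linarith [sub_eq_zero.mp (by linarith [h7] : ((k₁ : ℝ) * b - (k₂ : ℝ) * b) = 0)]
      have h9 : (k₁ : ℝ) = k₂ := mul_right_cancel₀ (by exact_mod_cast hb0) h8
      exact_mod_cast h9
    · exact absurd h7 hdv0
  have hinf := Set.infinite_of_injective_forall_mem
    (s := toV '' (D.Φ : Set (Lr r))) hinj
    (fun k => by
      obtain ⟨δ, hδ, hδeq⟩ := key k
      exact ⟨δ, hδ, hδeq⟩)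
  exact hinf ((D.Φ.finite_toSet).image toV)

lemma pair_continuous (D : ARDatum r) (y : Lr r) :
    Continuous fun z : Vr r => pairR (z + toV D.ρ) y := by
  unfold pairR
  apply continuous_finset_sum
  intro i _
  exact ((continuous_apply i).add continuous_const).mul continuous_const

lemma nfl_lb (D : ARDatum r) (hp : (0:ℝ) < D.p) {v : Vr r} (hv : v ∈ D.Reg)
    {β : Lr r} (hβ : β ∈ D.pos) :
    (D.nfl v β : ℝ) * D.p < pairR (v + toV D.ρ) (D.coroot β) := by
  have h1 : (D.nfl v β : ℝ) ≤ pairR (v + toV D.ρ) (D.coroot β) / D.p := Int.floor_le _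
  have h2 : (D.nfl v β : ℝ) * D.p ≤ pairR (v + toV D.ρ) (D.coroot β) :=
    (le_div_iff₀ hp).mp h1
  rcases lt_or_eq_of_le h2 with h | h
  · exact h
  · exact absurd h.symm (hv β hβ _)

lemma nfl_ub (D : ARDatum r) (hp : (0:ℝ) < D.p) (v : Vr r) (β : Lr r) :
    pairR (v + toV D.ρ) (D.coroot β) < ((D.nfl v β : ℝ) + 1) * D.p := by
  have h2 := Int.lt_floor_add_one (pairR (v + toV D.ρ) (D.coroot β) / D.p)
  exact (div_lt_iff₀ hp).mp h2

lemma nfl_const (D : ARDatum r) (hp : (0:ℝ) < D.p) {S : Set (Vr r)}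
    (hS : IsPreconnected S) (hreg : S ⊆ D.Reg) {v u : Vr r} (hv : v ∈ S) (hu : u ∈ S)
    {β : Lr r} (hβ : β ∈ D.pos) : D.nfl u β = D.nfl v β := by
  by_contra hne
  have hcont : ContinuousOn (fun z : Vr r => pairR (z + toV D.ρ) (D.coroot β)) S :=
    (pair_continuous D _).continuousOn
  rcases lt_or_gt_of_ne hne with hlt | hlt
  · have h1 : pairR (u + toV D.ρ) (D.coroot β) < (D.nfl v β : ℝ) * D.p := by
      have ha := nfl_ub D hp u β
      have hle : ((D.nfl u β : ℝ) + 1) ≤ (D.nfl v β : ℝ) := by exact_mod_cast hlt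
      nlinarith
    have h2 := nfl_lb D hp (hreg hv) hβ
    obtain ⟨z, hz, hzval⟩ := hS.intermediate_value hu hv hcont ⟨le_of_lt h1, le_of_lt h2⟩
    exact (hreg hz) β hβ (D.nfl v β) hzval
  · have h1 : pairR (v + toV D.ρ) (D.coroot β) < ((D.nfl v β : ℝ) + 1) * D.p :=
      nfl_ub D hp v β
    have h2 : ((D.nfl v β : ℝ) + 1) * D.p < pairR (u + toV D.ρ) (D.coroot β) := by
      have ha := nfl_lb D hp (hreg hu) hβ
      have hle : ((D.nfl v β : ℝ) + 1) ≤ (D.nfl u β : ℝ) := by exact_mod_cast hlt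
      nlinarith
    obtain ⟨z, hz, hzval⟩ := hS.intermediate_value hv hu hcont ⟨le_of_lt h1, le_of_lt h2⟩
    refine (hreg hz) β hβ (D.nfl v β + 1) ?_
    have hzval' : pairR (z + toV D.ρ) (D.coroot β) = ((D.nfl v β : ℝ) + 1) * D.p := hzval
    rw [hzval']; push_cast; ring

lemma closure_band (D : ARDatum r) (hp : (0:ℝ) < D.p) {S : Set (Vr r)}
    (hS : IsPreconnected S) (hreg : S ⊆ D.Reg) {v : Vr r} (hv : v ∈ S)
    {β : Lr r} (hβ : β ∈ D.pos) {u : Vr r} (hu : u ∈ closure S) :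
    (D.nfl v β : ℝ) * D.p ≤ pairR (u + toV D.ρ) (D.coroot β) ∧
      pairR (u + toV D.ρ) (D.coroot β) ≤ ((D.nfl v β : ℝ) + 1) * D.p := by
  have hsub : S ⊆ (fun z : Vr r => pairR (z + toV D.ρ) (D.coroot β)) ⁻¹'
      (Set.Icc ((D.nfl v β : ℝ) * D.p) (((D.nfl v β : ℝ) + 1) * D.p)) := by
    intro z hz
    have heq := nfl_const D hp hS hreg hv hz hβ
    constructor
    · have h := nfl_lb D hp (hreg hz) hβ; rw [heq] at h; exact le_of_lt h
    · have h := nfl_ub D hp z β; rw [heq] at h; exact le_of_lt h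
  have hcl : IsClosed ((fun z : Vr r => pairR (z + toV D.ρ) (D.coroot β)) ⁻¹'
      (Set.Icc ((D.nfl v β : ℝ) * D.p) (((D.nfl v β : ℝ) + 1) * D.p))) :=
    isClosed_Icc.preimage (pair_continuous D _)
  exact (closure_minimal hsub hcl) hu

lemma up_mono (D : ARDatum r) {μ : Vr r} (hμ : ∀ γ ∈ D.pos, 0 < Bf D μ (toV γ))
    {y z : Vr r} (h : D.Up y z) : Bf D μ y ≤ Bf D μ z := by
  induction h with
  | refl => exact le_rfl
  | @tail b c hab hbc ih =>
    obtain ⟨γ, hγ, m, hm, heq⟩ := hbc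
    have h4 : Bf D μ b = Bf D μ c -
        (pairR (c + toV D.ρ) (D.coroot γ) - (m : ℝ) * D.p) * Bf D μ (toV γ) := by
      rw [heq, Bf_sub_right, Bf_smul_right]
    have h5 := hμ γ hγ
    have h6 : 0 ≤ pairR (c + toV D.ρ) (D.coroot γ) - (m : ℝ) * D.p := by linarith
    have h7 := mul_nonneg h6 h5.le
    linarith

end Aux



/-- If `H_{α,n}` contains a wall of the alcove containing `w·λ` and
`s_{α,np}w·λ ≺ w·λ`, then `d(s_{α,np}w·λ) = d(w·λ) − 1`. -/
theorem stmt4 {r : ℕ} (D : ARDatum r)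
    (lam : Lr r) (hlam : toV lam ∈ D.FundC)
    (hlamstab : ∀ g ∈ D.Wp, D.dot g (toV lam) = toV lam → g = 1)
    (w : ARDatum.G r) (hw : w ∈ D.Wp)
    (α : Lr r) (hα : α ∈ D.pos) (n : ℤ)
    (t : ARDatum.G r) (ht : D.IsRefl α n t)
    (hwall : D.HasWall (D.alcoveOf (D.dot w (toV lam))) α n)
    (hlt : D.Ups (D.dot (t * w) (toV lam)) (D.dot w (toV lam))) :
    D.dfn (D.dot (t * w) (toV lam)) = D.dfn (D.dot w (toV lam)) - 1 := by
  classical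
  open Aux in
  have hp : (0:ℝ) < D.p := by exact_mod_cast D.hp.pos
  have hαΦ : α ∈ D.Φ := D.pos_sub hα
  set v : Vr r := D.dot w (toV lam) with hvdef
  set A : Set (Vr r) := D.alcoveOf v with hAdef
  obtain ⟨x, hx, ε, hε, hball⟩ := hwall
  have hxA : x ∈ closure A := hx.1
  have hxH : pairR (x + toV D.ρ) (D.coroot α) = (n:ℝ) * D.p := hx.2
  have hvReg : v ∈ D.Reg := by
    have hne : A.Nonempty := closure_nonempty_iff.mp ⟨x, hxA⟩
    exact connectedComponentIn_nonempty_iff.mp hne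
  set φ : Vr r → Vr r :=
    fun u => u - (pairR (u + toV D.ρ) (D.coroot α) - (n:ℝ) * D.p) • toV α with hφ
  have hφv : D.dot (t * w) (toV lam) = φ v := by
    have h1 : v + toV D.ρ = w (toV lam + toV D.ρ) := by
      rw [hvdef, ARDatum.dot]; abel
    have h2 : D.dot (t * w) (toV lam) = t (w (toV lam + toV D.ρ)) - toV D.ρ := rfl
    rw [h2, ← h1, ht (v + toV D.ρ), hφ]
    abel
  have hφpair : ∀ (u : Vr r) (β : Lr r),
      pairR (φ u + toV D.ρ) (D.coroot β)
        = pairR (u + toV D.ρ) (D.coroot β - pairZ α (D.coroot β) • D.coroot α)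
          + ((n:ℝ) * D.p) * (pairZ α (D.coroot β) : ℝ) := by
    intro u β
    have e1 : φ u + toV D.ρ
        = (u + toV D.ρ) - (pairR (u + toV D.ρ) (D.coroot α) - (n:ℝ) * D.p) • toV α := by
      rw [hφ]; funext i; simp only [Pi.add_apply, Pi.sub_apply, Pi.smul_apply, smul_eq_mul]; ring
    rw [e1, pairR_sub_left, pairR_smul_left, pairR_toV, pairR_sub_right,
      pairR_zsmul_right]
    ring
  have hφReg : ∀ u ∈ D.Reg, φ u ∈ D.Reg := by
    intro u hu β hβ m
    obtain ⟨δ, hδΦ, hδeq⟩ := D.reflect_coroot_mem α hαΦ β (D.pos_sub hβ)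
    rw [hφpair u β, ← hδeq]
    have hq : ∀ m' : ℤ, pairR (u + toV D.ρ) (D.coroot δ) ≠ (m' : ℝ) * D.p := by
      rcases D.pos_or_neg δ hδΦ with hp1 | hp1
      · exact fun m' => hu δ hp1 m'
      · intro m' hqe
        have h5 := pairR_coroot_neg D hδΦ (u + toV D.ρ)
        refine hu (-δ) hp1 (-m') ?_
        rw [h5, hqe]; push_cast; ring
    intro hcon
    refine hq (m - n * pairZ α (D.coroot β)) ?_
    push_cast
    linarith [hcon]
  -- positivity functional and the order argument
  have hμ : ∀ γ ∈ D.pos, 0 < Bf D (toV lam + toV D.ρ) (toV γ) := by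
    intro γ hγ
    have h1 := Bf_reflect D (D.pos_sub hγ) (toV lam + toV D.ρ)
    have h2 := (hlam γ hγ).1
    have h3 := Bf_diag_pos D (D.pos_sub hγ)
    have h4 := mul_pos h2 h3
    linarith
  have hφvreg : φ v = v - (pairR (v + toV D.ρ) (D.coroot α) - (n:ℝ) * D.p) • toV α := by
    rw [hφ]
  have hc_ne : pairR (v + toV D.ρ) (D.coroot α) ≠ (n:ℝ) * D.p := hvReg α hα n
  have hc_gt : (n:ℝ) * D.p < pairR (v + toV D.ρ) (D.coroot α) := by
    rcases lt_or_gt_of_ne hc_ne with hlt2 | h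
    · exfalso
      have h1 := up_mono D hμ hlt.1
      rw [hφv] at h1
      have h2 : Bf D (toV lam + toV D.ρ) (φ v)
          = Bf D (toV lam + toV D.ρ) v -
            (pairR (v + toV D.ρ) (D.coroot α) - (n:ℝ) * D.p) *
              Bf D (toV lam + toV D.ρ) (toV α) := by
        rw [hφvreg, Bf_sub_right, Bf_smul_right]
      have h3 := hμ α hα
      nlinarith
    · exact h
  -- alcove facts
  have hAconn : IsPreconnected A := isPreconnected_connectedComponentIn
  have hAreg : A ⊆ D.Reg := connectedComponentIn_subset _ _
  have hvA : v ∈ A := mem_connectedComponentIn hvReg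
  -- n_α(v) = n
  have hnval : D.nfl v α = n := by
    have hb := closure_band D hp hAconn hAreg hvA hα hxA
    rw [hxH] at hb
    have hlb := nfl_lb D hp hvReg hα
    have hub := nfl_ub D hp v α
    have h1 : D.nfl v α ≤ n := by
      have := (mul_le_mul_iff_left₀ hp).mp hb.1
      exact_mod_cast this
    have h2 : (n:ℝ) < (D.nfl v α : ℝ) + 1 := by
      have h3 : (n:ℝ) * D.p < ((D.nfl v α : ℝ) + 1) * D.p := lt_trans hc_gt hub
      exact (mul_lt_mul_iff_left₀ hp).mp h3
    have h2' : n < D.nfl v α + 1 := by exact_mod_cast h2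
    omega
  have hc_lt : pairR (v + toV D.ρ) (D.coroot α) < ((n:ℝ) + 1) * D.p := by
    have h := nfl_ub D hp v α
    rw [hnval] at h
    exact h
  -- the reflected alcove
  have hφcont : Continuous φ := by
    rw [hφ]
    exact continuous_id.sub
      (((pair_continuous D (D.coroot α)).sub continuous_const).smul continuous_const)
  set A' : Set (Vr r) := φ '' A with hA'def
  have hA'conn : IsPreconnected A' := hAconn.image φ hφcont.continuousOn
  have hA'reg : A' ⊆ D.Reg := by
    rintro _ ⟨u, hu, rfl⟩; exact hφReg u (hAreg hu)
  have hφvA' : φ v ∈ A' := Set.mem_image_of_mem φ hvA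
  have hφfix : ∀ y : Vr r, pairR (y + toV D.ρ) (D.coroot α) = (n:ℝ) * D.p → φ y = y := by
    intro y hy
    rw [hφ]
    show y - (pairR (y + toV D.ρ) (D.coroot α) - (n:ℝ) * D.p) • toV α = y
    rw [hy, sub_self, zero_smul, sub_zero]
  have hwall' : ∀ y : Vr r, pairR (y + toV D.ρ) (D.coroot α) = (n:ℝ) * D.p →
      dist y x < ε → y ∈ closure A ∧ y ∈ closure A' := by
    intro y hy hd
    have h1 : y ∈ closure A := hball y hy hd
    refine ⟨h1, ?_⟩
    have h2 : φ y ∈ φ '' closure A := Set.mem_image_of_mem _ h1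
    rw [hφfix y hy] at h2
    exact image_closure_subset_closure_image hφcont h2
  -- preservation for β ≠ α
  have hpres : ∀ β ∈ D.pos, β ≠ α → D.nfl (φ v) β = D.nfl v β := by
    intro β hβ hβne
    by_contra hne
    have hCy : ∀ y : Vr r, pairR (y + toV D.ρ) (D.coroot α) = (n:ℝ) * D.p →
        dist y x < ε → ∀ z : Vr r, pairR (z + toV D.ρ) (D.coroot α) = (n:ℝ) * D.p →
        dist z x < ε →
        pairR (y + toV D.ρ) (D.coroot β) = pairR (z + toV D.ρ) (D.coroot β) := by
      intro y hy hdy z hz hdz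
      obtain ⟨hyA, hyA'⟩ := hwall' y hy hdy
      obtain ⟨hzA, hzA'⟩ := hwall' z hz hdz
      have hby := closure_band D hp hAconn hAreg hvA hβ hyA
      have hbz := closure_band D hp hAconn hAreg hvA hβ hzA
      have hby' := closure_band D hp hA'conn hA'reg hφvA' hβ hyA'
      have hbz' := closure_band D hp hA'conn hA'reg hφvA' hβ hzA'
      rcases lt_or_gt_of_ne hne with h | h
      · have hle : ((D.nfl (φ v) β : ℝ) + 1) ≤ (D.nfl v β : ℝ) := by exact_mod_cast h
        have e1 : ((D.nfl (φ v) β : ℝ) + 1) * D.p ≤ (D.nfl v β : ℝ) * D.p := by nlinarith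
        linarith [hby.1, hby'.2, hbz.1, hbz'.2]
      · have hle : ((D.nfl v β : ℝ) + 1) ≤ (D.nfl (φ v) β : ℝ) := by exact_mod_cast h
        have e1 : ((D.nfl v β : ℝ) + 1) * D.p ≤ (D.nfl (φ v) β : ℝ) * D.p := by nlinarith
        linarith [hby.2, hby'.1, hbz.2, hbz'.1]
    have hperp : ∀ u : Vr r, pairR u (D.coroot α) = 0 → pairR u (D.coroot β) = 0 := by
      intro u hu
      set δs : ℝ := ε / (2 * (‖u‖ + 1)) with hδs
      have hδpos : 0 < δs := by
        apply div_pos hε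
        positivity
      have hyH : pairR ((x + δs • u) + toV D.ρ) (D.coroot α) = (n:ℝ) * D.p := by
        have e : (x + δs • u) + toV D.ρ = (x + toV D.ρ) + δs • u := by abel
        rw [e, pairR_add_left, pairR_smul_left, hu, mul_zero, add_zero, hxH]
      have hyd : dist (x + δs • u) x < ε := by
        rw [dist_eq_norm]
        have e : (x + δs • u) - x = δs • u := by abel
        rw [e, norm_smul, Real.norm_eq_abs, abs_of_pos hδpos]
        have h1 : ‖u‖ < 2 * (‖u‖ + 1) := by nlinarith [norm_nonneg u]
        have h2 : δs * (2 * (‖u‖ + 1)) = ε := by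
          rw [hδs]; field_simp
        nlinarith [norm_nonneg u]
      have hC := hCy (x + δs • u) hyH hyd x hxH (by rw [dist_self]; exact hε)
      have e2 : pairR ((x + δs • u) + toV D.ρ) (D.coroot β)
          = pairR (x + toV D.ρ) (D.coroot β) + δs * pairR u (D.coroot β) := by
        have e : (x + δs • u) + toV D.ρ = (x + toV D.ρ) + δs • u := by abel
        rw [e, pairR_add_left, pairR_smul_left]
      rw [e2] at hC
      have h3 : δs * pairR u (D.coroot β) = 0 := by linarith
      rcases mul_eq_zero.mp h3 with h4 | h4
      · exact absurd h4 (ne_of_gt hδpos)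
      · exact h4
    obtain ⟨s, hs⟩ := parallel_of_perp D hαΦ (D.pos_sub hβ) hperp
    exact not_parallel D hα hβ hβne s hs
  -- value at α
  have hnα' : D.nfl (φ v) α = n - 1 := by
    have hval : pairR (φ v + toV D.ρ) (D.coroot α)
        = 2 * ((n:ℝ) * D.p) - pairR (v + toV D.ρ) (D.coroot α) := by
      rw [hφpair v α, pairR_sub_right, pairR_zsmul_right, D.root_coroot_two α hαΦ]
      push_cast
      ring
    show (⌊pairR (φ v + toV D.ρ) (D.coroot α) / (D.p:ℝ)⌋ : ℤ) = n - 1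
    rw [hval, Int.floor_eq_iff]
    constructor
    · rw [le_div_iff₀ hp]; push_cast; linarith
    · rw [div_lt_iff₀ hp]; push_cast; linarith
  -- assemble
  rw [hφv]
  show (∑ β ∈ D.pos, D.nfl (φ v) β) = (∑ β ∈ D.pos, D.nfl v β) - 1
  rw [← Finset.sum_erase_add D.pos _ hα, ← Finset.sum_erase_add D.pos (fun β => D.nfl v β) hα]
  have hsum : ∑ β ∈ D.pos.erase α, D.nfl (φ v) β = ∑ β ∈ D.pos.erase α, D.nfl v β :=
    Finset.sum_congr rfl fun β hb =>
      hpres β (Finset.mem_of_mem_erase hb) (Finset.ne_of_mem_erase hb)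
  rw [hsum, hnα', hnval]
  ring


end
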